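/- Let V be a finite set, k a positive integer, H a family of subsets of V each of cardinality at most k, and w : H → ℝ_{≥0} a weight function. Let M ⊆ H be a family of pairwise disjoint sets such that every S ∈ H intersects some F ∈ M with w(F) ≥ w(S). Then for every family M' ⊆ H of pairwise disjoint sets, Σ_{F ∈ M} w(F) ≥ (1/k) · Σ_{S ∈ M'} w(S). -/

import Mathlib

open Finset

/-- A hypergraph of teams: each hyperedge is a subset of the vertex set `V`,
and distinct hyperedges are distinct subsets. -/
structure TeamStruct (V H : Type) where
  mem : H → Finset V
  mem_injective : Function.Injective mem

/-- A hypergraph matching: a family of pairwise disjoint hyperedges. -/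
def TeamStruct.IsHMatching {V H : Type} (G : TeamStruct V H) (M : Finset H) : Prop :=
  ∀ S ∈ M, ∀ T ∈ M, S ≠ T → Disjoint (G.mem S) (G.mem T)

/-- In a hypergraph whose hyperedges have cardinality at
most `k`, if `M` is a matching such that every hyperedge intersects some
member of `M` of at least its weight, then `M` is a `1/k`-approximation to
every matching in total weight. -/
theorem greedy_hypergraph_matching_approx
    {V H : Type} [Fintype V] [Fintype H]
    (G : TeamStruct V H) (k : ℕ) (hk : 0 < k)
    (hcard : ∀ S : H, (G.mem S).card ≤ k)
    (w : H → ℝ) (hw : ∀ S, 0 ≤ w S)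
    (M : Finset H) (hM : G.IsHMatching M)
    (hgreedy : ∀ S : H, ∃ F ∈ M, ¬ Disjoint (G.mem S) (G.mem F) ∧ w S ≤ w F)
    (M' : Finset H) (hM' : G.IsHMatching M') :
    (1 / k : ℝ) * ∑ S ∈ M', w S ≤ ∑ S ∈ M, w S := by
  classical
  -- choose for each S a member f S of M meeting it with larger weight
  choose f hfM hfInt hfw using hgreedy
  -- main inequality: ∑_{M'} w ≤ ∑_{M} k * w
  have key : ∑ S ∈ M', w S ≤ ∑ F ∈ M, (k : ℝ) * w F := by
    rw [← Finset.sum_fiberwise_of_maps_to (fun (S : H) (_ : S ∈ M') => hfM S) w]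
    apply Finset.sum_le_sum
    intro F hF
    have hcardfib : ((M'.filter (fun S => f S = F)).card : ℝ) ≤ (k : ℝ) := by
      have : (M'.filter (fun S => f S = F)).card ≤ (G.mem F).card := by
        -- injective map: each S contributes a vertex of G.mem S ∩ G.mem F
        have hvex : ∀ S ∈ M'.filter (fun S => f S = F),
            ∃ v, v ∈ G.mem S ∧ v ∈ G.mem F := by
          intro S hS
          simp only [Finset.mem_filter] at hS
          have := hfInt S
          rw [hS.2] at this
          rw [Finset.not_disjoint_iff] at this
          exact this
        choose v hv1 hv2 using hvex
        rcases Finset.eq_empty_or_nonempty (M'.filter (fun S => f S = F)) with he | hne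
        · simp [he]
        · obtain ⟨S0, hS0⟩ := hne
          haveI : Nonempty V := ⟨v S0 hS0⟩
          apply Finset.card_le_card_of_injOn (fun S => if h : S ∈ M'.filter (fun S => f S = F) then v S h else Classical.arbitrary V)
          · intro S hS
            simp only [Finset.mem_coe.mp hS, dif_pos]
            exact hv2 S hS
          · intro S hS T hT hST
            simp only [Finset.mem_coe] at hS hT
            simp only [hS, hT, dif_pos] at hST
            by_contra hne2
            have hd := hM' S (Finset.mem_filter.mp hS).1 T (Finset.mem_filter.mp hT).1 hne2
            exact (Finset.disjoint_left.mp hd (hv1 S hS)) (hST ▸ hv1 T hT)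
      calc ((M'.filter (fun S => f S = F)).card : ℝ) ≤ ((G.mem F).card : ℝ) := by
            exact_mod_cast this
        _ ≤ (k : ℝ) := by exact_mod_cast hcard F
    calc ∑ S ∈ M'.filter (fun S => f S = F), w S
        ≤ ∑ _S ∈ M'.filter (fun S => f S = F), w F := by
          apply Finset.sum_le_sum
          intro S hS
          have := hfw S
          rw [(Finset.mem_filter.mp hS).2] at this
          exact this
      _ = ((M'.filter (fun S => f S = F)).card : ℝ) * w F := by
          rw [Finset.sum_const, nsmul_eq_mul]
      _ ≤ (k : ℝ) * w F := by
          exact mul_le_mul_of_nonneg_right hcardfib (hw F)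
  have hkpos : (0 : ℝ) < k := by exact_mod_cast hk
  rw [div_mul_eq_mul_div, one_mul, div_le_iff₀ hkpos]
  calc ∑ S ∈ M', w S ≤ ∑ F ∈ M, (k : ℝ) * w F := key
    _ = (∑ S ∈ M, w S) * k := by rw [← Finset.mul_sum, mul_comm]
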